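/- A pure one-dimensional simplicial complex Δ is connected if and only if Δ is shellable. -/

import Mathlib

open Finset

/-- An (abstract) simplicial complex on vertex set `V`: a downward closed
family of finite subsets of `V`. -/
structure SimplicialComplex (V : Type*) where
  faces : Set (Finset V)
  down_closed : ∀ ⦃F G : Finset V⦄, F ∈ faces → G ⊆ F → G ∈ faces

namespace SimplicialComplex

variable {V : Type*}

/-- A facet is a maximal face. -/
def IsFacet (Δ : SimplicialComplex V) (F : Finset V) : Prop :=
  F ∈ Δ.faces ∧ ∀ G ∈ Δ.faces, F ⊆ G → F = G

/-- The deletion `del_Δ(x)`. -/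
def del [DecidableEq V] (Δ : SimplicialComplex V) (x : V) : SimplicialComplex V where
  faces := {F | F ∈ Δ.faces ∧ x ∉ F}
  down_closed := fun _F _G hF hG => ⟨Δ.down_closed hF.1 hG, fun hx => hF.2 (hG hx)⟩

/-- The link `lk_Δ(x)`. -/
def link [DecidableEq V] (Δ : SimplicialComplex V) (x : V) : SimplicialComplex V where
  faces := {F | x ∉ F ∧ insert x F ∈ Δ.faces}
  down_closed := fun _F _G hF hG =>
    ⟨fun hx => hF.1 (hG hx), Δ.down_closed hF.2 (Finset.insert_subset_insert x hG)⟩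

/-- The simplex `⟨F⟩` on a finite vertex set `F`. -/
def simplex (F : Finset V) : SimplicialComplex V where
  faces := {G | G ⊆ F}
  down_closed := fun _ _ hF hG => hG.trans hF

/-- Vertex decomposability (non-pure sense). -/
inductive IsVertexDecomposable [DecidableEq V] : SimplicialComplex V → Prop
  | simplex (Δ : SimplicialComplex V) (F : Finset V) (h : Δ.faces = {G | G ⊆ F}) :
      IsVertexDecomposable Δ
  | shed (Δ : SimplicialComplex V) (x : V)
      (hdel : IsVertexDecomposable (Δ.del x))
      (hlink : IsVertexDecomposable (Δ.link x))
      (hfacet : ∀ F, (Δ.del x).IsFacet F → Δ.IsFacet F) :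
      IsVertexDecomposable Δ

/-- Shellability (non-pure sense): an ordering `F 0 < F 1 < ⋯` of all the
facets such that for `i < j` there are `v ∈ F j \ F i` and `l < j` with
`F j \ F l = {v}`. -/
def IsShellable [DecidableEq V] (Δ : SimplicialComplex V) : Prop :=
  ∃ (m : ℕ) (F : Fin m → Finset V),
    Function.Injective F ∧
    (∀ G, Δ.IsFacet G ↔ ∃ i, F i = G) ∧
    ∀ i j : Fin m, i < j → ∃ v ∈ F j, v ∉ F i ∧ ∃ l, l < j ∧ F j \ F l = {v}

/-- A simplicial complex is pure if all facets have the same cardinality. -/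
def IsPure (Δ : SimplicialComplex V) : Prop :=
  ∀ F G, Δ.IsFacet F → Δ.IsFacet G → F.card = G.card

/-- The `(s 0, …, s (n-1))`-expansion of a simplicial complex on `{x_0, …, x_(n-1)}`.
The vertex `x_{ij}` (for `1 ≤ j ≤ s i`) is encoded as the pair `(i, s i - j)`;
so the copies of `x i` are the pairs `(i, r)` with `r < s i`.  The faces are
exactly the subsets of the sets `{x_{i₁ r₁}, …, x_{i_k r_k}}` where
`{x_{i₁}, …, x_{i_k}}` is a face (equivalently, a facet) of `Δ`. -/
def expansion {n : ℕ} (Δ : SimplicialComplex (Fin n)) (s : Fin n → ℕ) :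
    SimplicialComplex (Fin n × ℕ) where
  faces := {E | E.image Prod.fst ∈ Δ.faces ∧ (∀ p ∈ E, p.2 < s p.1) ∧
    ∀ p ∈ E, ∀ q ∈ E, p.1 = q.1 → p = q}
  down_closed := fun _E _G hE hG =>
    ⟨Δ.down_closed hE.1 (Finset.image_subset_image hG),
     fun p hp => hE.2.1 p (hG hp),
     fun p hp q hq => hE.2.2 p (hG hp) q (hG hq)⟩

/-- Restriction of a simplicial complex to a subtype of the vertices. -/
def restrict (Δ : SimplicialComplex V) (P : V → Prop) : SimplicialComplex {v // P v} where
  faces := {F | F.map (Function.Embedding.subtype P) ∈ Δ.faces}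
  down_closed := fun _F _G hF hG =>
    Δ.down_closed hF (Finset.map_subset_map.mpr hG)

end SimplicialComplex

namespace SimplicialComplex

/-- A simplicial complex is connected if any two of its vertices are joined by
a path of edges (faces with two elements). -/
def IsConnected [DecidableEq V] (Δ : SimplicialComplex V) : Prop :=
  ∀ x y : V, ({x} : Finset V) ∈ Δ.faces → ({y} : Finset V) ∈ Δ.faces →
    Relation.ReflTransGen (fun a b => ({a, b} : Finset V) ∈ Δ.faces) x y

end SimplicialComplex

namespace ShellAux
open SimplicialComplex
variable {V : Type*} [Fintype V] [DecidableEq V]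

set_option linter.unusedSectionVars false

lemma exists_facet_superset (Δ : SimplicialComplex V) {F : Finset V} (hF : F ∈ Δ.faces) :
    ∃ G, Δ.IsFacet G ∧ F ⊆ G := by
  have hfin : {G : Finset V | G ∈ Δ.faces ∧ F ⊆ G}.Finite := Set.toFinite _
  obtain ⟨G, hG, hmax⟩ := Set.Finite.exists_maximalFor Finset.card _ hfin ⟨F, hF, subset_rfl⟩
  exact ⟨G, ⟨hG.1, fun H hH hGH => Finset.eq_of_subset_of_card_le hGH
    (hmax ⟨hH, hG.2.trans hGH⟩ (Finset.card_le_card hGH))⟩, hG.2⟩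

lemma facet_of_card_two (Δ : SimplicialComplex V) (hpure : ∀ F, Δ.IsFacet F → F.card = 2)
    {E : Finset V} (hE : E ∈ Δ.faces) (h2 : E.card = 2) : Δ.IsFacet E := by
  obtain ⟨G, hG, hEG⟩ := exists_facet_superset Δ hE
  have : E = G := Finset.eq_of_subset_of_card_le hEG (by rw [hpure G hG, h2])
  rwa [this]

lemma sdiff_eq_singleton {E E' : Finset V} (h2 : E.card = 2) (h2' : E'.card = 2)
    (hne : E ≠ E') (hmeet : (E ∩ E').Nonempty) : ∃ v, v ∈ E ∧ v ∉ E' ∧ E \ E' = {v} := by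
  have hkey := Finset.card_sdiff_add_card_inter E E'
  have h1 : (E ∩ E').card = 1 := by
    have hpos : 0 < (E ∩ E').card := Finset.card_pos.mpr hmeet
    have hle : (E ∩ E').card ≤ 2 := h2 ▸ Finset.card_le_card Finset.inter_subset_left
    rcases Nat.lt_or_ge (E ∩ E').card 2 with h | h
    · omega
    · exfalso
      have hE : E ∩ E' = E := Finset.eq_of_subset_of_card_le Finset.inter_subset_left (by omega)
      have hE' : E ∩ E' = E' := Finset.eq_of_subset_of_card_le Finset.inter_subset_right
        (by rw [h2']; omega)
      exact hne (hE.symm.trans hE')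
  have hsd : (E \ E').card = 1 := by omega
  obtain ⟨v, hv⟩ := Finset.card_eq_one.mp hsd
  have hvE : v ∈ E \ E' := by rw [hv]; exact Finset.mem_singleton_self v
  exact ⟨v, (Finset.mem_sdiff.mp hvE).1, (Finset.mem_sdiff.mp hvE).2, hv⟩

lemma meet (Δ : SimplicialComplex V) (hpure : ∀ F, Δ.IsFacet F → F.card = 2)
    (hconn : Δ.IsConnected) (A B : Finset (Finset V))
    (hA : ∀ E ∈ A, Δ.IsFacet E) (hB : ∀ E ∈ B, Δ.IsFacet E)
    (htot : ∀ E, Δ.IsFacet E → E ∈ A ∨ E ∈ B)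
    (hAne : A.Nonempty) (hBne : B.Nonempty) :
    ∃ E ∈ B, ∃ E' ∈ A, (E ∩ E').Nonempty := by
  obtain ⟨E0, hE0A⟩ := hAne
  obtain ⟨EB, hEBB⟩ := hBne
  have hE0f := hA E0 hE0A
  have hEBf := hB EB hEBB
  obtain ⟨a, ha⟩ : E0.Nonempty := Finset.card_pos.mp (by rw [hpure E0 hE0f]; omega)
  obtain ⟨b, hb⟩ : EB.Nonempty := Finset.card_pos.mp (by rw [hpure EB hEBf]; omega)
  have hsa : ({a} : Finset V) ∈ Δ.faces :=
    Δ.down_closed hE0f.1 (Finset.singleton_subset_iff.mpr ha)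
  have hsb : ({b} : Finset V) ∈ Δ.faces :=
    Δ.down_closed hEBf.1 (Finset.singleton_subset_iff.mpr hb)
  have hr := hconn a b hsa hsb
  have key : ∀ y, Relation.ReflTransGen (fun a b => ({a, b} : Finset V) ∈ Δ.faces) a y →
      (∃ E' ∈ A, y ∈ E') ∨ (∃ E ∈ B, ∃ E' ∈ A, (E ∩ E').Nonempty) := by
    intro y h
    induction h with
    | refl => exact Or.inl ⟨E0, hE0A, ha⟩
    | @tail y z _ hyz ih =>
      rcases ih with ⟨E', hE'A, hyE'⟩ | done
      · by_cases hyzeq : y = z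
        · exact Or.inl ⟨E', hE'A, hyzeq ▸ hyE'⟩
        · have h2 : ({y, z} : Finset V).card = 2 := Finset.card_pair hyzeq
          have hf := facet_of_card_two Δ hpure hyz h2
          rcases htot _ hf with hA' | hB'
          · exact Or.inl ⟨{y, z}, hA', by simp⟩
          · exact Or.inr ⟨{y, z}, hB', E', hE'A,
              ⟨y, Finset.mem_inter.mpr ⟨by simp, hyE'⟩⟩⟩
      · exact Or.inr done
  rcases key b hr with ⟨E', hE'A, hbE'⟩ | done
  · exact ⟨EB, hEBB, E', hE'A, ⟨b, Finset.mem_inter.mpr ⟨hb, hbE'⟩⟩⟩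
  · exact done

def Good (L : List (Finset V)) : Prop :=
  ∀ j (hj : j < L.length), 0 < j →
    ∃ l, ∃ hl : l < L.length, l < j ∧ ((L[j]'hj) ∩ (L[l]'hl)).Nonempty

lemma build (Δ : SimplicialComplex V) (hpure : ∀ F, Δ.IsFacet F → F.card = 2)
    (hconn : Δ.IsConnected) (fac : Finset (Finset V))
    (hfacm : ∀ E, E ∈ fac ↔ Δ.IsFacet E) :
    ∀ n (B : Finset (Finset V)), B ⊆ fac → B.card = n →
    ∀ L : List (Finset V), L ≠ [] → L.Nodup →
    (∀ E ∈ L, E ∈ fac ∧ E ∉ B) → (∀ E ∈ fac, E ∉ B → E ∈ L) → Good L →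
    ∃ L' : List (Finset V), L' ≠ [] ∧ L'.Nodup ∧ (∀ E, E ∈ L' ↔ E ∈ fac) ∧ Good L' := by
  intro n
  induction n with
  | zero =>
    intro B hBsub hBcard L hLne hnd hLmem hLall hGood
    have hBempty : B = ∅ := Finset.card_eq_zero.mp hBcard
    subst hBempty
    exact ⟨L, hLne, hnd, fun E => ⟨fun h => (hLmem E h).1,
      fun h => hLall E h (Finset.notMem_empty E)⟩, hGood⟩
  | succ n ih =>
    intro B hBsub hBcard L hLne hnd hLmem hLall hGood
    have hBne : B.Nonempty := Finset.card_pos.mp (by omega)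
    have hAne : L.toFinset.Nonempty := by
      obtain ⟨x, hx⟩ := List.exists_mem_of_ne_nil L hLne
      exact ⟨x, List.mem_toFinset.mpr hx⟩
    obtain ⟨E, hEB, E', hE'A, hmeetEE⟩ := meet Δ hpure hconn L.toFinset B
      (fun G hG => (hfacm G).mp (hLmem G (List.mem_toFinset.mp hG)).1)
      (fun G hG => (hfacm G).mp (hBsub hG))
      (fun G hG => by
        by_cases hGB : G ∈ B
        · exact Or.inr hGB
        · exact Or.inl (List.mem_toFinset.mpr (hLall G ((hfacm G).mpr hG) hGB)))
      hAne hBne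
    have hEnotL : E ∉ L := fun h => (hLmem E h).2 hEB
    refine ih (B.erase E) ((Finset.erase_subset E B).trans hBsub)
      (by rw [Finset.card_erase_of_mem hEB]; omega)
      (L ++ [E]) (by simp) ?_ ?_ ?_ ?_
    · simp [List.nodup_append, hnd, hEnotL]; exact fun a ha h => hEnotL (h ▸ ha)
    · intro G hG
      rcases List.mem_append.mp hG with h | h
      · exact ⟨(hLmem G h).1, fun hc => (hLmem G h).2 (Finset.mem_of_mem_erase hc)⟩
      · have : G = E := List.mem_singleton.mp h
        subst this
        exact ⟨hBsub hEB, Finset.notMem_erase G B⟩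
    · intro G hGfac hGer
      by_cases hGE : G = E
      · subst hGE; exact List.mem_append.mpr (Or.inr (List.mem_singleton.mpr rfl))
      · have hGB : G ∉ B := fun h => hGer (Finset.mem_erase.mpr ⟨hGE, h⟩)
        exact List.mem_append.mpr (Or.inl (hLall G hGfac hGB))
    · intro j hj hj0
      rw [List.length_append, List.length_singleton] at hj
      by_cases hjL : j < L.length
      · obtain ⟨l, hl, hlj, hm⟩ := hGood j hjL hj0
        refine ⟨l, by simp; omega, hlj, ?_⟩
        rwa [List.getElem_append_left hjL, List.getElem_append_left hl]
      · have hjeq : j = L.length := by omega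
        obtain ⟨l, hl, hlE'⟩ := List.mem_iff_getElem.mp (List.mem_toFinset.mp hE'A)
        refine ⟨l, by simp; omega, by omega, ?_⟩
        have h1 : (L ++ [E])[j]'(by simp; omega) = E := by
          subst hjeq; exact List.getElem_concat_length rfl _
        have h2 : (L ++ [E])[l]'(by simp; omega) = E' := by
          rw [List.getElem_append_left hl]; exact hlE'
        rw [h1, h2]; exact hmeetEE

end ShellAux


open SimplicialComplex in
/-- a (nonempty, finite) pure one-dimensional simplicial complex
(every facet has exactly two vertices) is connected iff it is shellable. -/
theorem pure_one_dimensional_connected_iff_shellable {V : Type*}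
    [Fintype V] [DecidableEq V] (Δ : SimplicialComplex V)
    (hne : Δ.faces.Nonempty) (hpure : ∀ F, Δ.IsFacet F → F.card = 2) :
    Δ.IsConnected ↔ Δ.IsShellable := by
  constructor
  · -- connected → shellable
    intro hconn
    obtain ⟨F0, hF0⟩ := hne
    obtain ⟨E0, hE0f, -⟩ := ShellAux.exists_facet_superset Δ hF0
    have hfin : {G : Finset V | Δ.IsFacet G}.Finite := Set.toFinite _
    set fac : Finset (Finset V) := hfin.toFinset with hfacdef
    have hfacm : ∀ E, E ∈ fac ↔ Δ.IsFacet E := fun E => Set.Finite.mem_toFinset _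
    have hE0fac : E0 ∈ fac := (hfacm E0).mpr hE0f
    obtain ⟨L, hLne, hnd, hLmem, hGood⟩ := ShellAux.build Δ hpure hconn fac hfacm
      (fac.erase E0).card (fac.erase E0) (Finset.erase_subset _ _) rfl [E0]
      (by simp) (by simp)
      (by
        intro E hE
        have hEE : E = E0 := List.mem_singleton.mp hE
        subst hEE
        exact ⟨hE0fac, Finset.notMem_erase _ _⟩)
      (by
        intro E hEfac hEer
        have : E = E0 := by
          by_contra h
          exact hEer (Finset.mem_erase.mpr ⟨h, hEfac⟩)
        simp [this])
      (by intro j hj hj0; simp at hj; omega)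
    have hinj' : ∀ (a b : ℕ) (ha : a < L.length) (hb : b < L.length),
        L[a]'ha = L[b]'hb → a = b := by
      intro a b ha hb h
      have := List.nodup_iff_injective_get.mp hnd
        (a₁ := ⟨a, ha⟩) (a₂ := ⟨b, hb⟩) (by simpa [List.get_eq_getElem] using h)
      simpa using this
    have hfacetElem : ∀ (a : ℕ) (ha : a < L.length), Δ.IsFacet (L[a]'ha) := by
      intro a ha
      exact (hfacm _).mp ((hLmem _).mp (List.getElem_mem _))
    refine ⟨L.length, fun i => L[(i : ℕ)]'i.isLt, ?_, ?_, ?_⟩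
    · intro i j h
      exact Fin.ext (hinj' i.val j.val i.isLt j.isLt h)
    · intro G
      constructor
      · intro hG
        obtain ⟨a, ha, hGa⟩ := List.mem_iff_getElem.mp ((hLmem G).mpr ((hfacm G).mpr hG))
        exact ⟨⟨a, ha⟩, hGa⟩
      · rintro ⟨i, rfl⟩
        exact hfacetElem i.val i.isLt
    · intro i j hij
      have hij' : (i : ℕ) < (j : ℕ) := hij
      have h2j := hpure _ (hfacetElem j.val j.isLt)
      have h2i := hpure _ (hfacetElem i.val i.isLt)
      by_cases hm : ((L[(j : ℕ)]'j.isLt) ∩ (L[(i : ℕ)]'i.isLt)).Nonempty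
      · have hne2 : (L[(j : ℕ)]'j.isLt) ≠ (L[(i : ℕ)]'i.isLt) := fun h => by
          have := hinj' j.val i.val j.isLt i.isLt h; omega
        obtain ⟨v, hv1, hv2, hsd⟩ := ShellAux.sdiff_eq_singleton h2j h2i hne2 hm
        exact ⟨v, hv1, hv2, i, hij, hsd⟩
      · obtain ⟨l, hl, hlj, hm2⟩ := hGood j.val j.isLt (by omega)
        have hne2 : (L[(j : ℕ)]'j.isLt) ≠ (L[l]'hl) := fun h => by
          have := hinj' j.val l j.isLt hl h; omega
        obtain ⟨v, hv1, hv2, hsd⟩ := ShellAux.sdiff_eq_singleton h2j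
          (hpure _ (hfacetElem l hl)) hne2 hm2
        exact ⟨v, hv1, fun hvi => hm ⟨v, Finset.mem_inter.mpr ⟨hv1, hvi⟩⟩,
          ⟨l, hl⟩, hlj, hsd⟩
  · -- shellable → connected
    rintro ⟨m, F, hinj, hfac, hshell⟩ x y hx hy
    obtain ⟨Gx, hGxf, hxG⟩ := ShellAux.exists_facet_superset Δ hx
    obtain ⟨Gy, hGyf, hyG⟩ := ShellAux.exists_facet_superset Δ hy
    obtain ⟨ix, hix⟩ := (hfac Gx).mp hGxf
    obtain ⟨iy, hiy⟩ := (hfac Gy).mp hGyf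
    have hm : 0 < m := ix.pos
    have hfacet : ∀ i : Fin m, Δ.IsFacet (F i) := fun i => (hfac (F i)).mpr ⟨i, rfl⟩
    have hstep : ∀ (i : Fin m) (a b : V), a ∈ F i → b ∈ F i →
        ({a, b} : Finset V) ∈ Δ.faces := fun i a b ha hb =>
      Δ.down_closed (hfacet i).1 (Finset.insert_subset ha (Finset.singleton_subset_iff.mpr hb))
    have ha0ex : (F ⟨0, hm⟩).Nonempty :=
      Finset.card_pos.mp (by rw [hpure _ (hfacet ⟨0, hm⟩)]; omega)
    obtain ⟨a0, ha0⟩ := ha0ex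
    have key : ∀ n (j : Fin m), j.val < n → ∀ z ∈ F j,
        Relation.ReflTransGen (fun a b => ({a, b} : Finset V) ∈ Δ.faces) z a0 := by
      intro n
      induction n with
      | zero => intro j hj; exact absurd hj (Nat.not_lt_zero _)
      | succ n ih =>
        intro j hj z hz
        by_cases hj0 : j.val = 0
        · have hjj : j = ⟨0, hm⟩ := Fin.ext hj0
          subst hjj
          exact Relation.ReflTransGen.single (hstep _ z a0 hz ha0)
        · have hij : (⟨0, hm⟩ : Fin m) < j :=
            Fin.lt_def.mpr (Nat.pos_of_ne_zero hj0)
          obtain ⟨v, hv, hvi, l, hl, hsd⟩ := hshell ⟨0, hm⟩ j hij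
          have hint : (F j ∩ F l).Nonempty := by
            have hc := Finset.card_sdiff_add_card_inter (F j) (F l)
            rw [hsd, Finset.card_singleton] at hc
            have h2 := hpure _ (hfacet j)
            exact Finset.card_pos.mp (by omega)
          obtain ⟨w, hw⟩ := hint
          have hw1 := (Finset.mem_inter.mp hw).1
          have hw2 := (Finset.mem_inter.mp hw).2
          have hlval : l.val < n := by
            have := Fin.lt_def.mp hl; omega
          exact Relation.ReflTransGen.head (hstep j z w hz hw1) (ih l hlval w hw2)
    have hxF : x ∈ F ix := by rw [hix]; exact Finset.singleton_subset_iff.mp hxG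
    have hyF : y ∈ F iy := by rw [hiy]; exact Finset.singleton_subset_iff.mp hyG
    have hxa := key m ix ix.isLt x hxF
    have hya := key m iy iy.isLt y hyF
    have hsymm : Symmetric (fun a b => ({a, b} : Finset V) ∈ Δ.faces) := by
      intro a b h; rwa [Finset.pair_comm]
    exact hxa.trans ((@Relation.ReflTransGen.stdSymm _ _ ⟨hsymm⟩).symm _ _ hya)
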